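/- For every n ≥ 0 (writing Sⁿ for the word consisting of n letters S): c_F^{Sⁿ} = ẽ_{k₀} + ẽ_{s₀} + ẽ_{t₀}, x_SK^{Sⁿ} = ẽ_{k₀} + ẽ_{s₀}, x_TK^{Sⁿ} = (ẽ_{k₀} − ẽ_{t₀}) + n(ẽ_{k₀} + ẽ_{s₀}), g_F^{Sⁿ} = ẽ_{k₀} + ẽ_{t₀} − ẽ_{s₀}, v_SK^{Sⁿ} = ẽ_{s₀} − ẽ_{k₀}, and v_TK^{Sⁿ} = (ẽ_{s₀} − ẽ_{t₀}) + (n+1)(ẽ_{s₀} − ẽ_{k₀}). -/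

import Mathlib

namespace Markov

/-- The ambient space ℝ³. -/
abbrev V3 : Type := Fin 3 → ℝ

/-- Standard basis vectors ẽ₁, ẽ₂, ẽ₃ (indexed by `Fin 3`). -/
noncomputable def e (i : Fin 3) : V3 := Pi.single i 1

/-- The two generating letters of the free monoid 𝓜. -/
inductive Lt
  | S
  | T
  deriving DecidableEq

/-- Elements of the free monoid 𝓜 on `{S, T}`, as words (lists of letters
read left to right); the monoid operation is `++` and the identity is `[]`. -/
abbrev Word := List Lt

/-- A word is a trunk word iff it consists only of the letter `S`
(otherwise it is a branch word). -/
def IsTrunk (X : Word) : Prop := ∀ l ∈ X, l = Lt.S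

/-- Boolean trunk test. -/
def trunkB (X : Word) : Bool := X.all (fun l => decide (l = Lt.S))

/-- One mutation step for the triple `(g_K, g_S, g_T)`; the flag `trunk`
records whether the word being extended (on the right) is a trunk word. -/
noncomputable def gStep (trunk : Bool) (l : Lt) (v : V3 × V3 × V3) :
    V3 × V3 × V3 :=
  match l with
  | Lt.S => (2 • v.1 - v.2.1, v.1, v.2.2)
  | Lt.T =>
    if trunk then (2 • v.2.1 - v.2.2, v.2.1, v.1)
    else (2 • v.1 - v.2.2, v.1, v.2.1)

/-- Auxiliary recursion computing the g-vectors from the reversed word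
(head of the list = last letter of the word). -/
noncomputable def gRev (k s t : Fin 3) : Word → V3 × V3 × V3
  | [] => (2 • e s - e k, e s, e t)
  | l :: X => gStep (trunkB X) l (gRev k s t X)

/-- The triple of modified g-vectors `(g_K^X, g_S^X, g_T^X)` for the
permutation `(k₀, s₀, t₀) = (k, s, t)` of the indices. -/
noncomputable def g (k s t : Fin 3) (X : Word) : V3 × V3 × V3 :=
  gRev k s t X.reverse

/-- One mutation step for the triple `(c_K, c_S, c_T)`. -/
noncomputable def cStep (trunk : Bool) (l : Lt) (v : V3 × V3 × V3) :
    V3 × V3 × V3 :=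
  match l with
  | Lt.S => (-v.2.1, v.1 + 2 • v.2.1, v.2.2)
  | Lt.T =>
    if trunk then (-v.2.2, v.2.1 + 2 • v.2.2, v.1)
    else (-v.2.2, v.1 + 2 • v.2.2, v.2.1)

noncomputable def cRev (k s t : Fin 3) : Word → V3 × V3 × V3
  | [] => (-(e k), e s + 2 • e k, e t)
  | l :: X => cStep (trunkB X) l (cRev k s t X)

/-- The triple of modified c-vectors `(c_K^X, c_S^X, c_T^X)`. -/
noncomputable def c (k s t : Fin 3) (X : Word) : V3 × V3 × V3 :=
  cRev k s t X.reverse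

/-- `g_F^X = g_S^X + g_T^X − g_K^X`. -/
noncomputable def gF (k s t : Fin 3) (X : Word) : V3 :=
  (g k s t X).2.1 + (g k s t X).2.2 - (g k s t X).1

/-- `v_SK^X = g_K^X − g_S^X`. -/
noncomputable def vSK (k s t : Fin 3) (X : Word) : V3 :=
  (g k s t X).1 - (g k s t X).2.1

/-- `v_TK^X = g_K^X − g_T^X`. -/
noncomputable def vTK (k s t : Fin 3) (X : Word) : V3 :=
  (g k s t X).1 - (g k s t X).2.2

/-- `c_F^X = c_K^X + c_S^X + c_T^X`. -/
noncomputable def cF (k s t : Fin 3) (X : Word) : V3 :=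
  (c k s t X).1 + (c k s t X).2.1 + (c k s t X).2.2

/-- `x_SK^X = c_K^X + c_S^X`. -/
noncomputable def xSK (k s t : Fin 3) (X : Word) : V3 :=
  (c k s t X).1 + (c k s t X).2.1

/-- `x_TK^X = −(c_K^X + c_T^X)`. -/
noncomputable def xTK (k s t : Fin 3) (X : Word) : V3 :=
  -((c k s t X).1 + (c k s t X).2.2)

/-- Closed cone spanned by two vectors. -/
def C2 (v1 v2 : V3) : Set V3 :=
  {x | ∃ la lb : ℝ, 0 ≤ la ∧ 0 ≤ lb ∧ x = la • v1 + lb • v2}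

/-- Relatively open cone spanned by two vectors. -/
def C2o (v1 v2 : V3) : Set V3 :=
  {x | ∃ la lb : ℝ, 0 < la ∧ 0 < lb ∧ x = la • v1 + lb • v2}

/-- Closed cone spanned by three vectors. -/
def C3 (v1 v2 v3 : V3) : Set V3 :=
  {x | ∃ la lb lc : ℝ, 0 ≤ la ∧ 0 ≤ lb ∧ 0 ≤ lc ∧ x = la • v1 + lb • v2 + lc • v3}

/-- Relatively open cone spanned by four vectors. -/
def C4o (v1 v2 v3 v4 : V3) : Set V3 :=
  {x | ∃ la lb lc ld : ℝ, 0 < la ∧ 0 < lb ∧ 0 < lc ∧ 0 < ld ∧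
    x = la • v1 + lb • v2 + lc • v3 + ld • v4}

/-- The set `U_∘^X = C°(g_S^X, g_T^X, v_SK^X, v_TK^X)`. -/
noncomputable def Uo (k s t : Fin 3) (X : Word) : Set V3 :=
  C4o (g k s t X).2.1 (g k s t X).2.2 (vSK k s t X) (vTK k s t X)

/-- The set `U^W = U_∘^W ∪ C(g_S^W, g_T^W)`. -/
noncomputable def Uset (k s t : Fin 3) (W : Word) : Set V3 :=
  Uo k s t W ∪ C2 (g k s t W).2.1 (g k s t W).2.2

/-- Recursion step for the Calkin–Wilf-type coefficients `q`. -/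
def qstep (l : Lt) (p : ℤ × ℤ) : ℤ × ℤ :=
  match l with
  | Lt.S => (p.1 + p.2, p.2)
  | Lt.T => (p.2, p.1 + p.2)

/-- `qfun init X` : the pair obtained from `init` by the recursion
`q^{SX} = (a+b, b)`, `q^{TX} = (b, a+b)` (letters prepended). -/
def qfun (init : ℤ × ℤ) : Word → ℤ × ℤ
  | [] => init
  | l :: X => qstep l (qfun init X)

/-- Recursion step for the coefficients `p`. -/
def pstep (l : Lt) (p : ℤ × ℤ) : ℤ × ℤ :=
  match l with
  | Lt.S => (p.1 + p.2, p.2)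
  | Lt.T => (-p.2, -p.1 - p.2)

/-- `pfun init X` : the pair obtained from `init` by the recursion
`p^{SX} = (a+b, b)`, `p^{TX} = (−b, −a−b)` (letters prepended). -/
def pfun (init : ℤ × ℤ) : Word → ℤ × ℤ
  | [] => init
  | l :: X => pstep l (pfun init X)

/-- The three index data `σ₁ = (1,3,2)`, `σ₂ = (2,1,3)`, `σ₃ = (3,2,1)`
(written with indices `0,1,2` instead of `1,2,3`). -/
def sig : Fin 3 → Fin 3 × Fin 3 × Fin 3 :=
  ![(0, 2, 1), (1, 0, 2), (2, 1, 0)]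

/-- Modified g-vectors for the `i`-th subtree of the Markov quiver. -/
noncomputable def gM (i : Fin 3) (X : Word) : V3 × V3 × V3 :=
  g (sig i).1 (sig i).2.1 (sig i).2.2 X

/-- `𝔤ᵢ = ẽ_{s₀(i)} + ẽ_{t₀(i)} − ẽ_{k₀(i)}`. -/
noncomputable def giFrak (i : Fin 3) : V3 :=
  e (sig i).2.1 + e (sig i).2.2 - e (sig i).1

/-- The set `𝔊ᵢ` of modified g-vectors in the `i`-th subtree. -/
noncomputable def Gset (i : Fin 3) : Set V3 :=
  {v | ∃ a b : ℤ, 1 ≤ a ∧ 1 ≤ b ∧ Int.gcd a b = 1 ∧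
      v = giFrak i + (a : ℝ) • (e (sig i).1 - e (sig i).2.2) +
        (b : ℝ) • (e (sig i).2.1 - e (sig i).1)} ∪
    {e (sig i).2.1}

/-- The support `𝒮` of the G-fan of the Markov quiver. -/
noncomputable def Supp : Set V3 :=
  C3 (e 0) (e 1) (e 2) ∪
    ⋃ (i : Fin 3), ⋃ (X : Word), C3 (gM i X).1 (gM i X).2.1 (gM i X).2.2

/-- The half space `V = {x : x₁+x₂+x₃ > 0} ∪ {0}`. -/
def Vhalf : Set V3 := {x | 0 < x 0 + x 1 + x 2} ∪ {0}

lemma cRevS (k s t : Fin 3) (n : ℕ) :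
    cRev k s t (List.replicate n Lt.S) =
      (-(e k) - (n : ℝ) • (e k + e s),
       e k + ((n : ℝ) + 1) • (e k + e s), e t) := by
  induction n with
  | zero =>
    simp only [List.replicate_zero, cRev, Nat.cast_zero, zero_smul, sub_zero, one_smul, zero_add,
      Prod.mk.injEq]
    exact ⟨trivial, by module, trivial⟩
  | succ m ih =>
    rw [List.replicate_succ, cRev, ih]
    simp only [cStep, Prod.mk.injEq]
    push_cast
    exact ⟨by module, by module, trivial⟩

lemma gRevS (k s t : Fin 3) (n : ℕ) :
    gRev k s t (List.replicate n Lt.S) =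
      (2 • e s - e k + (n : ℝ) • (e s - e k),
       e s + (n : ℝ) • (e s - e k), e t) := by
  induction n with
  | zero => simp [gRev]
  | succ m ih =>
    rw [List.replicate_succ, gRev, ih]
    simp only [gStep, Prod.mk.injEq]
    push_cast
    exact ⟨by module, by module, trivial⟩

lemma cS (k s t : Fin 3) (n : ℕ) :
    c k s t (List.replicate n Lt.S) =
      (-(e k) - (n : ℝ) • (e k + e s),
       e k + ((n : ℝ) + 1) • (e k + e s), e t) := by
  rw [c, List.reverse_replicate, cRevS]

lemma gS (k s t : Fin 3) (n : ℕ) :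
    g k s t (List.replicate n Lt.S) =
      (2 • e s - e k + (n : ℝ) • (e s - e k),
       e s + (n : ℝ) • (e s - e k), e t) := by
  rw [g, List.reverse_replicate, gRevS]

/-- c- and g-vectors on the trunk `Sⁿ`. -/
theorem stmt_3 (k s t : Fin 3) (hks : k ≠ s) (hkt : k ≠ t) (hst : s ≠ t)
    (n : ℕ) :
    cF k s t (List.replicate n Lt.S) = e k + e s + e t ∧
    xSK k s t (List.replicate n Lt.S) = e k + e s ∧
    xTK k s t (List.replicate n Lt.S) = (e k - e t) + n • (e k + e s) ∧
    gF k s t (List.replicate n Lt.S) = e k + e t - e s ∧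
    vSK k s t (List.replicate n Lt.S) = e s - e k ∧
    vTK k s t (List.replicate n Lt.S) = (e s - e t) + (n + 1) • (e s - e k) := by
  refine ⟨?_, ?_, ?_, ?_, ?_, ?_⟩ <;>
    simp only [cF, xSK, xTK, gF, vSK, vTK, cS, gS, ← Nat.cast_smul_eq_nsmul ℝ] <;>
    push_cast <;> module

end Markov
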